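/- Let p be a prime and R a perfect commutative ring of characteristic p (the map x ↦ x^p is an automorphism of R). Let A be a commutative ring such that: p is not a zero divisor in A; A is separated and complete for the p-adic topology (the natural map A → lim_n A/p^n A is a bijection); and there is given a ring isomorphism ḡ : A/pA ≅ R. Then there exists a unique ring isomorphism f : W(R) → A whose reduction modulo p equals ḡ^{-1} composed with the canonical projection W(R) → R. In other words, a strict p-ring with perfect residue ring R is uniquely isomorphic to the ring of Witt vectors W(R). -/
import Mathlib

set_option linter.unusedSectionVars false
set_option maxHeartbeats 1000000

open WittVector Finset Ideal

namespace SPR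

variable (p : ℕ) [hp : Fact p.Prime]
variable (R : Type*) [CommRing R] [CharP R p] [PerfectRing R p]

/-- iterated Frobenius as a ring hom -/
noncomputable def fr : ℕ → (R →+* R)
  | 0 => RingHom.id R
  | (n+1) => (fr n).comp (frobenius R p)

/-- iterated inverse Frobenius as a ring hom -/
noncomputable def fi : ℕ → (R →+* R)
  | 0 => RingHom.id R
  | (n+1) => (fi n).comp ((frobeniusEquiv R p).symm : R ≃+* R)

variable {p R}

lemma psi_fr (n : ℕ) (r : R) :
    (frobeniusEquiv R p).symm (fr p R n r) = fr p R n ((frobeniusEquiv R p).symm r) := by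
  induction n generalizing r with
  | zero => simp [fr]
  | succ n ih =>
      simp only [fr, RingHom.comp_apply]
      rw [ih, frobeniusEquiv_symm_apply_frobenius, frobenius_apply_frobeniusEquiv_symm]

lemma phi_fi (n : ℕ) (r : R) :
    frobenius R p (fi p R n r) = fi p R n (frobenius R p r) := by
  induction n generalizing r with
  | zero => simp [fi]
  | succ n ih =>
      simp only [fi, RingHom.comp_apply, RingEquiv.coe_toRingHom]
      rw [ih, frobenius_apply_frobeniusEquiv_symm, frobeniusEquiv_symm_apply_frobenius]

lemma fi_fr (n : ℕ) (r : R) : fi p R n (fr p R n r) = r := by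
  induction n generalizing r with
  | zero => simp [fr, fi]
  | succ n ih =>
      simp only [fr, fi, RingHom.comp_apply, RingEquiv.coe_toRingHom]
      rw [psi_fr, frobeniusEquiv_symm_apply_frobenius, ih]

lemma fr_fi (n : ℕ) (r : R) : fr p R n (fi p R n r) = r := by
  induction n generalizing r with
  | zero => simp [fr, fi]
  | succ n ih =>
      simp only [fr, fi, RingHom.comp_apply, RingEquiv.coe_toRingHom]
      rw [phi_fi, frobenius_apply_frobeniusEquiv_symm, ih]

lemma fr_apply_pow (n : ℕ) (r : R) : fr p R n r = r ^ p ^ n := by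
  induction n generalizing r with
  | zero => simp [fr]
  | succ n ih =>
      simp only [fr, RingHom.comp_apply, ih, frobenius_def]
      rw [← pow_mul, ← pow_succ']

lemma fi_pow (n : ℕ) (r : R) : (fi p R n r) ^ p ^ n = r := by
  rw [← fr_apply_pow, fr_fi]

lemma fi_pow_p (n : ℕ) (r : R) : (fi p R (n+1) r) ^ p = fi p R n r := by
  rw [← frobenius_def]
  simp only [fi, RingHom.comp_apply, RingEquiv.coe_toRingHom]
  rw [phi_fi, frobenius_apply_frobeniusEquiv_symm]

variable {A : Type*} [CommRing A]

local notation "𝕀" => Ideal.span {(p : A)}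
local notation "qk" => Ideal.Quotient.mk (Ideal.span {(p : A)})

lemma mem_pow_iff {n : ℕ} {a : A} : a ∈ 𝕀 ^ n ↔ (p : A) ^ n ∣ a := by
  rw [span_singleton_pow, mem_span_singleton]

lemma smul_top_eq (n : ℕ) : ((𝕀 ^ n) • (⊤ : Submodule A A)) = 𝕀 ^ n := by
  rw [smul_eq_mul, mul_top]

variable (g : A ⧸ Ideal.span {(p : A)} ≃+* R)

/-- a set-theoretic section of the residue map, lifting `g.symm` -/
noncomputable def sec (r : R) : A := (Ideal.Quotient.mk_surjective (I := 𝕀) (g.symm r)).choose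

lemma sec_spec (r : R) : qk (sec g r) = g.symm r :=
  (Ideal.Quotient.mk_surjective (I := 𝕀) (g.symm r)).choose_spec

/-- the `n`-th ghost approximation of the image of a Witt vector in `A` -/
noncomputable def U (x : WittVector p R) (n : ℕ) : A :=
  ∑ i ∈ range (n+1), (p : A) ^ i * (sec g (fi p R n (x.coeff i))) ^ p ^ (n - i)

lemma dvd_of_qk_eq {a b : A} (h : qk a = qk b) : (p : A) ∣ a - b := by
  rw [← mem_span_singleton]
  exact (Submodule.Quotient.eq _).mp h

/-- ghost components of coefficient-wise lifts agree with `U` mod `p^(n+1)` -/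
lemma ghost_congr (n : ℕ) (x : WittVector p R) (xt : WittVector p A)
    (h : ∀ i, qk (xt.coeff i) = g.symm (fi p R n (x.coeff i))) :
    (p : A) ^ (n+1) ∣ ghostComponent n xt - U g x n := by
  rw [ghostComponent_apply, aeval_wittPolynomial, U, ← Finset.sum_sub_distrib]
  refine Finset.dvd_sum fun i hi => ?_
  rw [Finset.mem_range, Nat.lt_succ_iff] at hi
  rw [← mul_sub]
  have h1 : (p : A) ∣ xt.coeff i - sec g (fi p R n (x.coeff i)) :=
    dvd_of_qk_eq (by rw [h i, sec_spec])
  have h2 : (p : A) ^ (n - i + 1) ∣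
      xt.coeff i ^ p ^ (n - i) - sec g (fi p R n (x.coeff i)) ^ p ^ (n - i) := by
    have := dvd_sub_pow_of_dvd_sub h1 (n - i)
    simpa using this
  calc (p : A) ^ (n+1) = (p : A) ^ i * (p : A) ^ (n - i + 1) := by
        rw [← pow_add]; congr 1; omega
    _ ∣ (p : A) ^ i * (xt.coeff i ^ p ^ (n - i) - sec g (fi p R n (x.coeff i)) ^ p ^ (n - i)) :=
        mul_dvd_mul_left _ h2

lemma U_succ (x : WittVector p R) (n : ℕ) :
    (p : A) ^ (n+1) ∣ U g x (n+1) - U g x n := by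
  have hsplit : U g x (n+1) - U g x n =
      (p : A) ^ (n+1) * (sec g (fi p R (n+1) (x.coeff (n+1)))) ^ p ^ ((n+1) - (n+1))
      + ∑ i ∈ range (n+1), (p : A) ^ i *
          ((sec g (fi p R (n+1) (x.coeff i))) ^ p ^ ((n+1) - i)
            - (sec g (fi p R n (x.coeff i))) ^ p ^ (n - i)) := by
    rw [U, U, sum_range_succ]
    simp only [mul_sub, sum_sub_distrib]
    ring
  rw [hsplit]
  refine dvd_add ⟨_, rfl⟩ (Finset.dvd_sum fun i hi => ?_)
  rw [Finset.mem_range, Nat.lt_succ_iff] at hi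
  have hpow : sec g (fi p R (n+1) (x.coeff i)) ^ p ^ ((n+1) - i)
      = (sec g (fi p R (n+1) (x.coeff i)) ^ p) ^ p ^ (n - i) := by
    rw [← pow_mul]
    congr 1
    rw [← pow_succ']
    congr 1
    omega
  have h1 : (p : A) ∣ sec g (fi p R (n+1) (x.coeff i)) ^ p - sec g (fi p R n (x.coeff i)) := by
    refine dvd_of_qk_eq ?_
    rw [map_pow, sec_spec, sec_spec, ← map_pow, fi_pow_p]
  have h2 := dvd_sub_pow_of_dvd_sub h1 (n - i)
  rw [hpow]
  calc (p : A) ^ (n+1) = (p : A) ^ i * (p : A) ^ (n - i + 1) := by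
        rw [← pow_add]; congr 1; omega
    _ ∣ _ := mul_dvd_mul_left _ (by simpa using h2)

lemma U_mono (x : WittVector p R) {m n : ℕ} (h : m ≤ n) :
    U g x n - U g x m ∈ 𝕀 ^ (m+1) := by
  induction n with
  | zero => cases Nat.le_zero.mp h; simp
  | succ n ih =>
      rcases Nat.lt_or_ge m (n+1) with h' | h'
      · have h'' : m ≤ n := by omega
        have : U g x (n+1) - U g x m = (U g x (n+1) - U g x n) + (U g x n - U g x m) := by ring
        rw [this]
        refine add_mem ?_ (ih h'')
        exact Ideal.pow_le_pow_right (Nat.succ_le_succ h'') (mem_pow_iff.mpr (U_succ g x n))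
      · have : m = n + 1 := by omega
        subst this; simp

variable [IsAdicComplete (Ideal.span {(p : A)}) A]

lemma exists_f0 (x : WittVector p R) : ∃ L : A, ∀ n, L - U g x n ∈ 𝕀 ^ (n+1) := by
  obtain ⟨L, hL⟩ := IsPrecomplete.prec (IsAdicComplete.toIsPrecomplete (I := 𝕀) (M := A))
    (f := fun n => U g x n) (by
      intro m n hmn
      rw [SModEq.sub_mem, smul_top_eq]
      have h2 : U g x m - U g x n ∈ 𝕀 ^ (m+1) := by
        have := neg_mem (U_mono g x hmn); simpa using this
      exact Ideal.pow_le_pow_right (Nat.le_succ m) h2)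
  refine ⟨L, fun n => ?_⟩
  have h1 : U g x (n+1) - L ∈ 𝕀 ^ (n+1) := by
    have := hL (n+1)
    rw [SModEq.sub_mem, smul_top_eq] at this
    exact this
  have h2 : U g x (n+1) - U g x n ∈ 𝕀 ^ (n+1) := mem_pow_iff.mpr (U_succ g x n)
  have : L - U g x n = -(U g x (n+1) - L) + (U g x (n+1) - U g x n) := by ring
  rw [this]
  exact add_mem (neg_mem h1) h2

lemma spec_unique {x : WittVector p R} {L L' : A}
    (h : ∀ n, L - U g x n ∈ 𝕀 ^ (n+1)) (h' : ∀ n, L' - U g x n ∈ 𝕀 ^ (n+1)) : L = L' := by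
  have := IsAdicComplete.toIsHausdorff (I := 𝕀) (M := A)
  have hz : L - L' = 0 := by
    refine this.haus (L - L') fun n => ?_
    rw [SModEq.zero, smul_top_eq]
    have : L - L' = (L - U g x n) - (L' - U g x n) := by ring
    rw [this]
    exact Ideal.pow_le_pow_right (Nat.le_succ n) (sub_mem (h n) (h' n))
  exact sub_eq_zero.mp hz

noncomputable def f0 (x : WittVector p R) : A := (exists_f0 g x).choose

lemma f0_spec (x : WittVector p R) (n : ℕ) : f0 g x - U g x n ∈ 𝕀 ^ (n+1) :=
  (exists_f0 g x).choose_spec n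

lemma f0_eq_of_spec {x : WittVector p R} {L : A} (h : ∀ n, L - U g x n ∈ 𝕀 ^ (n+1)) :
    f0 g x = L :=
  spec_unique g (f0_spec g x) h

lemma p_mul_mem {k : ℕ} {a : A} (h : a ∈ 𝕀 ^ k) : (p : A) * a ∈ 𝕀 ^ (k+1) := by
  rw [mem_pow_iff] at h ⊢
  obtain ⟨c, rfl⟩ := h
  exact ⟨c, by rw [pow_succ']; ring⟩

/-- canonical coefficientwise lift -/
noncomputable def xlift (n : ℕ) (x : WittVector p R) : WittVector p A :=
  WittVector.mk p fun i => sec g (fi p R n (x.coeff i))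

lemma xlift_coeff (n : ℕ) (x : WittVector p R) (i : ℕ) :
    qk ((xlift g n x).coeff i) = g.symm (fi p R n (x.coeff i)) := sec_spec g _

lemma f0_add (x y : WittVector p R) : f0 g (x + y) = f0 g x + f0 g y := by
  refine f0_eq_of_spec g fun n => ?_
  have hx := f0_spec g x n
  have hy := f0_spec g y n
  have h1 : (p : A) ^ (n+1) ∣ ghostComponent n (xlift g n x) - U g x n :=
    ghost_congr g n x _ (xlift_coeff g n x)
  have h2 : (p : A) ^ (n+1) ∣ ghostComponent n (xlift g n y) - U g y n :=
    ghost_congr g n y _ (xlift_coeff g n y)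
  have h3 : (p : A) ^ (n+1) ∣
      ghostComponent n (xlift g n x + xlift g n y) - U g (x + y) n := by
    refine ghost_congr g n (x + y) _ fun i => ?_
    have : qk ((xlift g n x + xlift g n y).coeff i)
        = (map qk (xlift g n x) + map qk (xlift g n y)).coeff i := by
      rw [← map_add, map_coeff]
    rw [this]
    have hx' : map qk (xlift g n x)
        = map ((g.symm : R ≃+* A ⧸ 𝕀).toRingHom.comp (fi p R n)) x := by
      ext j; rw [map_coeff, map_coeff]; exact xlift_coeff g n x j
    have hy' : map qk (xlift g n y)
        = map ((g.symm : R ≃+* A ⧸ 𝕀).toRingHom.comp (fi p R n)) y := by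
      ext j; rw [map_coeff, map_coeff]; exact xlift_coeff g n y j
    rw [hx', hy', ← map_add, map_coeff]
    rfl
  have hg : ghostComponent n (xlift g n x + xlift g n y)
      = ghostComponent n (xlift g n x) + ghostComponent n (xlift g n y) := map_add _ _ _
  have key : f0 g x + f0 g y - U g (x + y) n
      = (f0 g x - U g x n) + (f0 g y - U g y n)
        - (ghostComponent n (xlift g n x) - U g x n)
        - (ghostComponent n (xlift g n y) - U g y n)
        + (ghostComponent n (xlift g n x + xlift g n y) - U g (x + y) n) := by
    rw [hg]; ring
  rw [key]
  exact add_mem (sub_mem (sub_mem (add_mem hx hy) (mem_pow_iff.mpr h1)) (mem_pow_iff.mpr h2))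
    (mem_pow_iff.mpr h3)

lemma f0_mul (x y : WittVector p R) : f0 g (x * y) = f0 g x * f0 g y := by
  refine f0_eq_of_spec g fun n => ?_
  have hx := f0_spec g x n
  have hy := f0_spec g y n
  have h1 : (p : A) ^ (n+1) ∣ ghostComponent n (xlift g n x) - U g x n :=
    ghost_congr g n x _ (xlift_coeff g n x)
  have h2 : (p : A) ^ (n+1) ∣ ghostComponent n (xlift g n y) - U g y n :=
    ghost_congr g n y _ (xlift_coeff g n y)
  have h3 : (p : A) ^ (n+1) ∣
      ghostComponent n (xlift g n x * xlift g n y) - U g (x * y) n := by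
    refine ghost_congr g n (x * y) _ fun i => ?_
    have : qk ((xlift g n x * xlift g n y).coeff i)
        = (map qk (xlift g n x) * map qk (xlift g n y)).coeff i := by
      rw [← _root_.map_mul, map_coeff]
    rw [this]
    have hx' : map qk (xlift g n x)
        = map ((g.symm : R ≃+* A ⧸ 𝕀).toRingHom.comp (fi p R n)) x := by
      ext j; rw [map_coeff, map_coeff]; exact xlift_coeff g n x j
    have hy' : map qk (xlift g n y)
        = map ((g.symm : R ≃+* A ⧸ 𝕀).toRingHom.comp (fi p R n)) y := by
      ext j; rw [map_coeff, map_coeff]; exact xlift_coeff g n y j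
    rw [hx', hy', ← _root_.map_mul, map_coeff]
    rfl
  have hg : ghostComponent n (xlift g n x * xlift g n y)
      = ghostComponent n (xlift g n x) * ghostComponent n (xlift g n y) := map_mul _ _ _
  have key : f0 g x * f0 g y - U g (x * y) n
      = (f0 g x - U g x n) * f0 g y
        + U g x n * (f0 g y - U g y n)
        - (ghostComponent n (xlift g n x) - U g x n) * ghostComponent n (xlift g n y)
        - U g x n * (ghostComponent n (xlift g n y) - U g y n)
        + (ghostComponent n (xlift g n x * xlift g n y) - U g (x * y) n) := by
    rw [hg]; ring
  rw [key]
  refine add_mem (sub_mem (sub_mem (add_mem ?_ ?_) ?_) ?_) (mem_pow_iff.mpr h3)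
  · exact Ideal.mul_mem_right _ _ hx
  · exact Ideal.mul_mem_left _ _ hy
  · exact Ideal.mul_mem_right _ _ (mem_pow_iff.mpr h1)
  · exact Ideal.mul_mem_left _ _ (mem_pow_iff.mpr h2)

lemma f0_one : f0 g 1 = 1 := by
  refine f0_eq_of_spec g fun n => ?_
  have h : (p : A) ^ (n+1) ∣ ghostComponent n (1 : WittVector p A) - U g 1 n := by
    refine ghost_congr g n 1 1 fun i => ?_
    cases i with
    | zero => simp [one_coeff_zero]
    | succ i => simp [one_coeff_eq_of_pos]
  rw [map_one] at h
  exact mem_pow_iff.mpr h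

/-- the canonical ring homomorphism `W(R) →+* A` -/
noncomputable def F : WittVector p R →+* A where
  toFun := f0 g
  map_one' := f0_one g
  map_mul' := f0_mul g
  map_zero' := by
    have h := f0_add g 0 0
    rw [add_zero] at h
    exact (left_eq_add.mp h)
  map_add' := f0_add g

lemma F_mod (x : WittVector p R) : qk (F g x) = g.symm (x.coeff 0) := by
  have h := f0_spec g x 0
  rw [pow_one] at h
  have hU : U g x 0 = sec g (x.coeff 0) := by
    simp [U, fi]
  rw [hU] at h
  have : qk (f0 g x) = qk (sec g (x.coeff 0)) := by
    rwa [Ideal.Quotient.mk_eq_mk_iff_sub_mem]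
  rw [show F g x = f0 g x from rfl, this, sec_spec]

lemma fi_succ_apply (n : ℕ) (r : R) :
    fi p R (n+1) r = fi p R n ((frobeniusEquiv R p).symm r) := rfl

lemma f0_verschiebung (y : WittVector p R) :
    f0 g (verschiebung y) = (p : A) * f0 g (map (frobeniusEquiv R p).symm.toRingHom y) := by
  refine f0_eq_of_spec g fun n => ?_
  cases n with
  | zero =>
      have hU : U g (verschiebung y) 0 = sec g 0 := by
        simp [U, fi, verschiebung_coeff_zero]
      rw [pow_one, hU]
      refine sub_mem (Ideal.mul_mem_right _ _ (mem_span_singleton_self _)) ?_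
      rw [← Ideal.Quotient.eq_zero_iff_mem, sec_spec, map_zero]
  | succ m =>
      set ym := map (frobeniusEquiv R p).symm.toRingHom y with hym
      set w := xlift g m ym with hw
      have h3 : (p : A) ^ (m+1+1) ∣
          ghostComponent (m+1) (verschiebung w) - U g (verschiebung y) (m+1) := by
        refine ghost_congr g (m+1) _ _ fun i => ?_
        cases i with
        | zero =>
            rw [verschiebung_coeff_zero, verschiebung_coeff_zero]
            simp
        | succ i =>
            rw [verschiebung_coeff_succ, verschiebung_coeff_succ, hw, xlift_coeff]
            congr 1
      have h1 : (p : A) ^ (m+1) ∣ ghostComponent m w - U g ym m :=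
        ghost_congr g m ym _ (xlift_coeff g m ym)
      have hx := f0_spec g ym m
      have hg := ghostComponent_verschiebung w m
      have key : (p : A) * f0 g ym - U g (verschiebung y) (m+1)
          = (p : A) * (f0 g ym - U g ym m)
            - (p : A) * (ghostComponent m w - U g ym m)
            + (ghostComponent (m+1) (verschiebung w) - U g (verschiebung y) (m+1)) := by
        rw [hg]; ring
      rw [key]
      exact add_mem (sub_mem (p_mul_mem hx) (p_mul_mem (mem_pow_iff.mpr h1)))
        (mem_pow_iff.mpr h3)

lemma f0_coeff_zero {x : WittVector p R} (h : f0 g x = 0) : x.coeff 0 = 0 := by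
  have hm := F_mod g x
  rw [show F g x = f0 g x from rfl, h, map_zero] at hm
  apply g.symm.injective
  rw [← hm, map_zero]

lemma shift_eq {x : WittVector p R} (h : x.coeff 0 = 0) :
    verschiebung (WittVector.mk p fun i => x.coeff (i+1)) = x := by
  ext n
  cases n with
  | zero => rw [verschiebung_coeff_zero, h]
  | succ n => rw [verschiebung_coeff_succ]; rfl

lemma f0_injective (hreg : ∀ a : A, (p : A) * a = 0 → a = 0) :
    Function.Injective (F g) := by
  have key : ∀ n : ℕ, ∀ x : WittVector p R, f0 g x = 0 → x.coeff n = 0 := by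
    intro n
    induction n with
    | zero => exact fun x h => f0_coeff_zero g h
    | succ n ih =>
        intro x h
        have h0 := f0_coeff_zero g h
        have hv : verschiebung (WittVector.mk p fun i => x.coeff (i+1)) = x := shift_eq h0
        have hV := f0_verschiebung g (WittVector.mk p fun i => x.coeff (i+1))
        rw [hv, h] at hV
        have h2 : f0 g (map (frobeniusEquiv R p).symm.toRingHom
            (WittVector.mk p fun i => x.coeff (i+1))) = 0 := hreg _ hV.symm
        have h4 := ih _ h2
        rw [map_coeff] at h4
        have h5 : (WittVector.mk p fun i => x.coeff (i+1)).coeff n = 0 := by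
          apply (frobeniusEquiv R p).symm.injective
          rw [map_zero]
          exact h4
        simpa using h5
  intro a b hab
  have hz : f0 g (a - b) = 0 := by
    have : F g (a - b) = 0 := by rw [map_sub, hab, sub_self]
    exact this
  have : a - b = 0 := WittVector.ext fun n => by rw [key n _ hz, zero_coeff]
  exact sub_eq_zero.mp this

lemma psi_fi (n : ℕ) (r : R) :
    (frobeniusEquiv R p).symm (fi p R n r) = fi p R n ((frobeniusEquiv R p).symm r) := by
  induction n generalizing r with
  | zero => simp [fi]
  | succ n ih =>
      simp only [fi, RingHom.comp_apply, RingEquiv.coe_toRingHom]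
      rw [ih]

lemma map_fi_succ (k : ℕ) (u : WittVector p R) :
    map (frobeniusEquiv R p).symm.toRingHom (map (fi p R k) u) = map (fi p R (k+1)) u := by
  ext i
  rw [map_coeff, map_coeff, map_coeff]
  exact psi_fi k _

lemma map_fi_zero (u : WittVector p R) : map (fi p R 0) u = u :=
  WittVector.ext fun i => by rw [map_coeff]; rfl

lemma map_fi_fr (k : ℕ) (u : WittVector p R) :
    map (fi p R k) (map (fr p R k) u) = u :=
  WittVector.ext fun i => by rw [map_coeff, map_coeff]; exact fi_fr k _

lemma f0_iterate_verschiebung (k : ℕ) (u : WittVector p R) :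
    f0 g (verschiebung^[k] u) = (p : A) ^ k * f0 g (map (fi p R k) u) := by
  induction k generalizing u with
  | zero => rw [Function.iterate_zero_apply, map_fi_zero, pow_zero, one_mul]
  | succ k ih =>
      rw [Function.iterate_succ_apply, ih, map_verschiebung, f0_verschiebung, map_fi_succ,
        ← mul_assoc, ← pow_succ]

lemma iterate_verschiebung_coeff_lt (k : ℕ) (u : WittVector p R) {i : ℕ} (h : i < k) :
    (verschiebung^[k] u).coeff i = 0 := by
  induction k generalizing i u with
  | zero => omega
  | succ k ih =>
      rw [Function.iterate_succ_apply']
      cases i with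
      | zero => exact verschiebung_coeff_zero _
      | succ i => rw [verschiebung_coeff_succ]; exact ih _ (by omega)

lemma init_coeff_lt (n : ℕ) (x : WittVector p R) {i : ℕ} (hi : i < n) :
    (init n x).coeff i = x.coeff i := by
  show (select (fun i => i < n) x).coeff i = x.coeff i
  simp only [select, coeff_mk]
  rw [if_pos hi]

lemma init_coeff_ge (n : ℕ) (x : WittVector p R) {i : ℕ} (hi : ¬ i < n) :
    (init n x).coeff i = 0 := by
  show (select (fun i => i < n) x).coeff i = 0
  simp only [select, coeff_mk]
  rw [if_neg hi]

lemma init_eq_zero {n : ℕ} {z : WittVector p R} (h : ∀ j, j < n → z.coeff j = 0) :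
    init n z = 0 := by
  ext j
  rw [zero_coeff]
  rcases Nat.lt_or_ge j n with hj | hj
  · rw [init_coeff_lt n z hj]; exact h j hj
  · rw [init_coeff_ge n z (by omega)]

lemma coeff_add_of_lt {n : ℕ} (x z : WittVector p R) (h : ∀ j, j < n → z.coeff j = 0)
    {i : ℕ} (hi : i < n) : (x + z).coeff i = x.coeff i := by
  have h1 : init n (x + z) = init n x := by
    rw [init_add, init_eq_zero h, add_zero, init_init]
  rw [← init_coeff_lt n (x + z) hi, h1, init_coeff_lt n x hi]

lemma coeff_sub_of_eq {n : ℕ} {x y : WittVector p R} (h : ∀ j, j < n → x.coeff j = y.coeff j)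
    {i : ℕ} (hi : i < n) : (x - y).coeff i = 0 := by
  have hxy : init n x = init n y := by
    ext j
    rcases Nat.lt_or_ge j n with hj | hj
    · rw [init_coeff_lt n x hj, init_coeff_lt n y hj]; exact h j hj
    · rw [init_coeff_ge n x (by omega), init_coeff_ge n y (by omega)]
  have h0 : init n (x - y) = 0 := by
    rw [init_sub, hxy, sub_self]
    exact init_eq_zero fun j _ => zero_coeff p R j
  rw [← init_coeff_lt n (x - y) hi, h0, zero_coeff]

lemma eq_iterate_verschiebung {m : ℕ} {z : WittVector p R} (h : ∀ j, j < m → z.coeff j = 0) :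
    z = verschiebung^[m] (WittVector.mk p fun i => z.coeff (i + m)) := by
  ext j
  rcases Nat.lt_or_ge j m with hj | hj
  · rw [h j hj, iterate_verschiebung_coeff_lt m _ hj]
  · obtain ⟨k, rfl⟩ : ∃ k, j = k + m := ⟨j - m, by omega⟩
    rw [iterate_verschiebung_coeff]
    rfl

lemma f0_surjective : Function.Surjective (F g) := by
  intro a
  have step : ∀ b : A, ∃ d : A, b - f0 g (teichmuller p (g (qk b))) = (p : A) * d := by
    intro b
    have h0 : qk (b - f0 g (teichmuller p (g (qk b)))) = 0 := by
      rw [map_sub]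
      have hm := F_mod g (teichmuller p (g (qk b)))
      rw [show F g (teichmuller p (g (qk b)))
          = f0 g (teichmuller p (g (qk b))) from rfl] at hm
      rw [hm, teichmuller_coeff_zero, RingEquiv.symm_apply_apply, sub_self]
    rw [Ideal.Quotient.eq_zero_iff_mem, mem_span_singleton] at h0
    exact h0
  classical
  let c : ℕ → A := fun n => Nat.rec (motive := fun _ => A) a (fun _ cn => (step cn).choose) n
  have hc0 : c 0 = a := rfl
  have hcs : ∀ n, c n - f0 g (teichmuller p (g (qk (c n)))) = (p : A) * c (n+1) :=
    fun n => (step (c n)).choose_spec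
  let r : ℕ → R := fun n => g (qk (c n))
  let t : ℕ → WittVector p R := fun k => verschiebung^[k] (map (fr p R k) (teichmuller p (r k)))
  let S : ℕ → WittVector p R :=
    fun m => Nat.rec (motive := fun _ => WittVector p R) 0 (fun k Sk => Sk + t k) m
  have hS0 : S 0 = 0 := rfl
  have hSs : ∀ m, S (m+1) = S m + t m := fun m => rfl
  have hft : ∀ k, f0 g (t k) = (p : A) ^ k * f0 g (teichmuller p (r k)) := by
    intro k
    show f0 g (verschiebung^[k] (map (fr p R k) (teichmuller p (r k)))) = _
    rw [f0_iterate_verschiebung, map_fi_fr]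
  have htcoeff : ∀ k, ∀ j, j < k → (t k).coeff j = 0 :=
    fun k j hj => iterate_verschiebung_coeff_lt k _ hj
  have hrem : ∀ m, a - f0 g (S m) = (p : A) ^ m * c m := by
    intro m
    induction m with
    | zero =>
        rw [hS0, hc0, pow_zero, one_mul]
        rw [show f0 g (0 : WittVector p R) = 0 from map_zero (F g), sub_zero]
    | succ m ih =>
        rw [hSs, f0_add g, hft m]
        have hkey : a - (f0 g (S m) + (p : A) ^ m * f0 g (teichmuller p (r m)))
            = (a - f0 g (S m)) - (p : A) ^ m * f0 g (teichmuller p (r m)) := by ring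
        rw [hkey, ih, ← mul_sub, hcs m, ← mul_assoc, ← pow_succ]
  have hstab : ∀ m m', m ≤ m' → ∀ i, i < m → (S m').coeff i = (S m).coeff i := by
    intro m m' hmm'
    induction m', hmm' using Nat.le_induction with
    | base => intro i _; rfl
    | succ m' hm ih =>
        intro i hi
        rw [hSs, coeff_add_of_lt (S m') (t m') (htcoeff m') (by omega : i < m')]
        exact ih i hi
  let xf : WittVector p R := WittVector.mk p fun i => (S (i+1)).coeff i
  have hxf : ∀ m, ∀ j, j < m → xf.coeff j = (S m).coeff j := by
    intro m j hj
    show (S (j+1)).coeff j = (S m).coeff j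
    rcases le_or_gt (j+1) m with hle | hlt
    · exact (hstab (j+1) m hle j (by omega)).symm
    · have : m = j + 1 := by omega
      rw [this]
  have hdiffmem : ∀ m, a - F g xf ∈ 𝕀 ^ m := by
    intro m
    have hz : ∀ j, j < m → (xf - S m).coeff j = 0 :=
      fun j hj => coeff_sub_of_eq (fun j' hj' => hxf m j' hj') hj
    have hdec := eq_iterate_verschiebung hz
    have hval : f0 g (xf - S m) = (p : A) ^ m
        * f0 g (map (fi p R m) (WittVector.mk p fun i => (xf - S m).coeff (i + m))) := by
      rw [hdec, f0_iterate_verschiebung]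
      rw [← hdec]
    have key : a - F g xf = (a - f0 g (S m)) - f0 g (xf - S m) := by
      have hms := map_sub (F g) xf (S m)
      show a - f0 g xf = _
      rw [show f0 g (xf - S m) = f0 g xf - f0 g (S m) from hms]
      ring
    rw [key, hrem m, hval]
    exact sub_mem (mem_pow_iff.mpr ⟨c m, rfl⟩) (mem_pow_iff.mpr ⟨_, rfl⟩)
  refine ⟨xf, ?_⟩
  have h0 : a - F g xf = 0 := by
    refine (IsAdicComplete.toIsHausdorff (I := 𝕀) (M := A)).haus _ fun n => ?_
    rw [SModEq.zero, smul_top_eq]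
    exact hdiffmem n
  exact (sub_eq_zero.mp h0).symm

lemma hom_eq (F' : WittVector p R →+* A)
    (h' : ∀ x, qk (F' x) = g.symm (x.coeff 0)) : ∀ x, F' x = F g x := by
  have key : ∀ n : ℕ, ∀ x : WittVector p R, F' x - F g x ∈ 𝕀 ^ n := by
    intro n
    induction n with
    | zero => intro x; rw [pow_zero, Ideal.one_eq_top]; trivial
    | succ n ih =>
        intro x
        have hy0 : (x - teichmuller p (x.coeff 0)).coeff 0 = 0 := by
          refine coeff_sub_of_eq (n := 1) (fun j hj => ?_) (by omega)
          have hj0 : j = 0 := by omega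
          subst hj0
          rw [teichmuller_coeff_zero]
        have hv := shift_eq hy0
        set y' := WittVector.mk p fun i => (x - teichmuller p (x.coeff 0)).coeff (i+1) with hy'
        set w := map (frobeniusEquiv R p).symm.toRingHom y' with hwdef
        have hFw : frobenius w = y' := by
          rw [frobenius_eq_map_frobenius]
          exact WittVector.ext fun i => by
            rw [hwdef, map_coeff, map_coeff]
            exact frobenius_apply_frobeniusEquiv_symm R p _
        have hxdec : x = teichmuller p (x.coeff 0) + w * (p : WittVector p R) := by
          have h1 : verschiebung (frobenius w) = w * p := verschiebung_frobenius w
          rw [hFw] at h1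
          rw [← h1, hv]
          ring
        have hteich : F' (teichmuller p (x.coeff 0))
            - F g (teichmuller p (x.coeff 0)) ∈ 𝕀 ^ (n+1) := by
          have hpow : teichmuller p (x.coeff 0)
              = (teichmuller p (fi p R n (x.coeff 0))) ^ (p ^ n) := by
            rw [← map_pow, fi_pow]
          have hu : (p : A) ∣ F' (teichmuller p (fi p R n (x.coeff 0)))
              - F g (teichmuller p (fi p R n (x.coeff 0))) := by
            refine dvd_of_qk_eq ?_
            rw [h' _, F_mod g _]
          have hd := dvd_sub_pow_of_dvd_sub hu n
          rw [hpow, map_pow, map_pow]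
          exact mem_pow_iff.mpr (by simpa using hd)
        have hw : (F' w - F g w) * (p : A) ∈ 𝕀 ^ (n+1) := by
          rw [pow_succ]
          exact Ideal.mul_mem_mul (ih w) (mem_span_singleton_self _)
        have keyx : F' x - F g x
            = (F' (teichmuller p (x.coeff 0)) - F g (teichmuller p (x.coeff 0)))
              + (F' w - F g w) * (p : A) := by
          conv_lhs => rw [hxdec]
          rw [map_add, map_add, _root_.map_mul, _root_.map_mul, map_natCast, map_natCast]
          ring
        rw [keyx]
        exact add_mem hteich hw
  intro x
  have h0 : F' x - F g x = 0 := by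
    refine (IsAdicComplete.toIsHausdorff (I := 𝕀) (M := A)).haus _ fun n => ?_
    rw [SModEq.zero, smul_top_eq]
    exact key n x
  exact sub_eq_zero.mp h0

end SPR

/-- A strict `p`-ring with perfect residue ring `R` of characteristic `p` is uniquely
isomorphic to the ring of Witt vectors `W(R)`: if `A` is a ring in which `p` is not a zero
divisor, which is separated and complete for the `p`-adic topology, together with an
identification `ḡ : A/pA ≅ R`, then there is a unique ring isomorphism `f : W(R) ≅ A`
whose reduction modulo `p` is `ḡ⁻¹` composed with the canonical projection `W(R) → R`. -/
theorem witt_vectors_universal_property (p : ℕ) [Fact p.Prime]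
    (R : Type*) [CommRing R] [CharP R p] [PerfectRing R p]
    (A : Type*) [CommRing A]
    (hreg : ∀ a : A, (p : A) * a = 0 → a = 0)
    [IsAdicComplete (Ideal.span {(p : A)}) A]
    (g : A ⧸ Ideal.span {(p : A)} ≃+* R) :
    ∃! f : WittVector p R ≃+* A,
      ∀ x : WittVector p R,
        Ideal.Quotient.mk (Ideal.span {(p : A)}) (f x) = g.symm (x.coeff 0) := by
  classical
  have hbij : Function.Bijective (SPR.F g) := ⟨SPR.f0_injective g hreg, SPR.f0_surjective g⟩
  refine ⟨RingEquiv.ofBijective (SPR.F g) hbij, fun x => SPR.F_mod g x, ?_⟩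
  intro f' hf'
  have heq : ∀ x, (f' : WittVector p R →+* A) x = SPR.F g x :=
    SPR.hom_eq g (f' : WittVector p R →+* A) (fun x => hf' x)
  exact RingEquiv.ext fun x => heq x
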